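/- Let p ≥ q ≥ 0 and n ≥ 1 be integers, and let N be the n × n integer matrix with entries N_{ij} = C(p, q − i + j) for 1 ≤ i, j ≤ n. Then N is nonsingular (det N ≠ 0), and its determinant satisfies det N · H(p) · H(p − q + n) · H(q + n) = H(n) · H(p + n) · H(p − q) · H(q). -/

import Mathlib

/-- The hyperfactorial `H(m) = ∏_{i=0}^{m-1} i!`, with `H(0) = 1`. -/
def hyperfactorial (m : ℕ) : ℕ := ∏ i ∈ Finset.range m, Nat.factorial i

open Finset Polynomial

private lemma fact_mul_asc (a k : ℕ) :
    a.factorial * ∏ t ∈ range k, (a + t + 1) = (a + k).factorial := by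
  induction k with
  | zero => simp
  | succ k ih =>
      rw [prod_range_succ, ← mul_assoc, ih, show a + (k+1) = (a+k)+1 from rfl,
        Nat.factorial_succ]
      ring

private lemma prod_shift (a k : ℕ) :
    ∏ t ∈ range k, ((a : ℚ) + t + 1) = ((a + k).factorial : ℚ) / a.factorial := by
  have h2 : ((a.factorial : ℚ)) * ∏ t ∈ range k, ((a:ℚ) + t + 1)
      = (((a+k).factorial : ℚ)) := by exact_mod_cast fact_mul_asc a k
  rw [eq_div_iff (by positivity)]
  linear_combination h2

noncomputable def auxP (p q n j : ℕ) : Polynomial ℚ :=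
  (∏ s ∈ Finset.Ioc j (n-1), (C ((q:ℚ) + s) - X)) *
  ∏ u ∈ Finset.range j, (X + C ((p:ℚ) - q - u))

lemma auxP_eval (p q n j : ℕ) (x : ℚ) :
    (auxP p q n j).eval x =
      (∏ s ∈ Finset.Ioc j (n-1), ((q:ℚ) + s - x)) *
      ∏ u ∈ Finset.range j, (x + ((p:ℚ) - q - u)) := by
  simp [auxP, eval_prod]

lemma auxP_natDegree_lt (p q n j : ℕ) (hj : j < n) :
    (auxP p q n j).natDegree < n := by
  have h1 : (∏ s ∈ Ioc j (n-1), (C ((q:ℚ)+s) - X)).natDegree ≤ (n-1) - j := by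
    refine le_trans (natDegree_prod_le _ _) ?_
    refine le_trans (Finset.sum_le_card_nsmul _ _ 1 ?_) (by simp [Nat.card_Ioc])
    intro s _
    exact le_trans (natDegree_sub_le _ _) (max_le ((natDegree_C _).le.trans zero_le_one) natDegree_X_le)
  have h2 : (∏ u ∈ range j, (X + C ((p:ℚ) - q - u))).natDegree ≤ j := by
    refine le_trans (natDegree_prod_le _ _) ?_
    refine le_trans (Finset.sum_le_card_nsmul _ _ 1 ?_) (by simp)
    intro s _
    exact le_trans (natDegree_add_le _ _) (max_le natDegree_X_le ((natDegree_C _).le.trans zero_le_one))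
  have := le_trans (natDegree_mul_le (p := (∏ s ∈ Ioc j (n-1), (C ((q:ℚ)+s) - X)))
    (q := ∏ u ∈ range j, (X + C ((p:ℚ) - q - u)))) (add_le_add h1 h2)
  rw [auxP]
  omega

noncomputable def auxA (p q n : ℕ) : Matrix (Fin n) (Fin n) ℚ :=
  Matrix.of fun k j => (auxP p q n (j:ℕ)).coeff (k:ℕ)

lemma eval_mat (p q n : ℕ) (x : Fin n → ℚ) :
    (Matrix.of fun i j : Fin n => (auxP p q n (j:ℕ)).eval (x i)) =
      Matrix.vandermonde x * auxA p q n := by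
  ext i j
  rw [Matrix.mul_apply]
  simp only [Matrix.vandermonde, auxA, Matrix.of_apply]
  rw [eval_eq_sum_range' (auxP_natDegree_lt p q n j j.isLt) (x i),
    ← Fin.sum_univ_eq_sum_range]
  exact Finset.sum_congr rfl fun k _ => mul_comm _ _

lemma det_eval_mat (p q n : ℕ) (x : Fin n → ℚ) :
    (Matrix.of fun i j : Fin n => (auxP p q n (j:ℕ)).eval (x i)).det =
      (Matrix.vandermonde x).det * (auxA p q n).det := by
  rw [eval_mat, Matrix.det_mul]

lemma det_shift_invariant (p q n : ℕ) :
    (Matrix.of fun i j : Fin n => (auxP p q n (j:ℕ)).eval ((i:ℚ))).det =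
      (Matrix.of fun i j : Fin n => (auxP p q n (j:ℕ)).eval ((q:ℚ) + (i:ℕ))).det := by
  rw [det_eval_mat, det_eval_mat]
  congr 1
  rw [Matrix.det_vandermonde, Matrix.det_vandermonde]
  refine Finset.prod_congr rfl fun i _ => Finset.prod_congr rfl fun j _ => by ring

private lemma prod_desc (b k : ℕ) :
    ∏ u ∈ range k, ((b:ℚ) + k - u) = ((b + k).factorial : ℚ) / b.factorial := by
  rw [← prod_shift, ← Finset.prod_range_reflect (fun u => (b:ℚ) + u + 1) k]
  refine Finset.prod_congr rfl fun u hu => ?_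
  rw [Finset.mem_range] at hu
  have h : ((k - 1 - u : ℕ):ℚ) = (k:ℚ) - 1 - u := by
    rw [Nat.cast_sub (by omega), Nat.cast_sub (by omega)]
    norm_num
  show (b:ℚ) + k - u = (b:ℚ) + ((k - 1 - u : ℕ):ℚ) + 1
  rw [h]; ring

private lemma prod_fact (k : ℕ) : ∏ t ∈ range k, ((t:ℚ) + 1) = (k.factorial : ℚ) := by
  induction k with
  | zero => simp
  | succ k ih =>
      rw [prod_range_succ, ih, Nat.factorial_succ]
      push_cast; ring

lemma det_tri (p q n : ℕ) (hn : 1 ≤ n) :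
    (Matrix.of fun i j : Fin n => (auxP p q n (j:ℕ)).eval ((q:ℚ) + (i:ℕ))).det =
      ∏ i : Fin n, (((n-1-(i:ℕ)).factorial : ℚ) *
        (((p+(i:ℕ)).factorial : ℚ) / (p.factorial : ℚ))) := by
  rw [Matrix.det_of_upperTriangular]
  · refine Finset.prod_congr rfl fun i _ => ?_
    rw [Matrix.of_apply, auxP_eval]
    have h1 : (∏ s ∈ Finset.Ioc (i:ℕ) (n-1), ((q:ℚ) + s - ((q:ℚ) + (i:ℕ))))
        = ((n-1-(i:ℕ)).factorial : ℚ) := by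
      rw [← Finset.Ico_add_one_add_one_eq_Ioc, Finset.prod_Ico_eq_prod_range,
        show (n-1)+1 - ((i:ℕ)+1) = n-1-(i:ℕ) by omega, ← prod_fact (n-1-(i:ℕ))]
      refine Finset.prod_congr rfl fun t _ => by push_cast; ring
    have h2 : (∏ u ∈ Finset.range (i:ℕ), ((q:ℚ) + (i:ℕ) + ((p:ℚ) - q - u)))
        = ((p+(i:ℕ)).factorial : ℚ) / (p.factorial : ℚ) := by
      rw [← prod_desc p (i:ℕ)]
      refine Finset.prod_congr rfl fun u _ => by push_cast; ring
    rw [h1, h2]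
  · intro i j hij
    rw [Matrix.of_apply, auxP_eval]
    apply mul_eq_zero_of_left
    refine Finset.prod_eq_zero (i := (i:ℕ)) ?_ (by push_cast; ring)
    rw [Finset.mem_Ioc]
    have : (j:ℕ) < (i:ℕ) := hij
    omega

lemma entry_eq (p q n : ℕ) (hpq : q ≤ p) {i j : ℕ} (hi : i < n) (hj : j < n) :
    (if i ≤ q + j then ((p.choose (q+j-i)) : ℚ) else 0) =
      ((p.factorial : ℚ) / (((q + (n-1-i)).factorial : ℚ) * (((p-q) + i).factorial : ℚ))) *
        (auxP p q n j).eval (i : ℚ) := by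
  rw [auxP_eval]
  by_cases hij : i ≤ q + j
  · by_cases hm : q + j - i ≤ p
    · -- main case
      rw [if_pos hij, Nat.cast_choose ℚ hm]
      set m := q + j - i with hmdef
      set r := p + i - q - j with hrdef
      have h1 : (∏ s ∈ Finset.Ioc j (n-1), ((q:ℚ) + s - i))
          = ((m + (n-1-j)).factorial : ℚ) / (m.factorial : ℚ) := by
        rw [← Finset.Ico_add_one_add_one_eq_Ioc, Finset.prod_Ico_eq_prod_range,
          show (n-1)+1 - (j+1) = n-1-j by omega, ← prod_shift m (n-1-j)]
        refine Finset.prod_congr rfl fun t _ => ?_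
        have : ((m:ℕ):ℚ) = (q:ℚ) + j - i := by
          rw [hmdef, Nat.cast_sub hij]; push_cast; ring
        rw [this]; push_cast; ring
      have h2 : (∏ u ∈ Finset.range j, ((i:ℚ) + ((p:ℚ) - q - u)))
          = ((r + j).factorial : ℚ) / (r.factorial : ℚ) := by
        rw [← prod_desc r j]
        refine Finset.prod_congr rfl fun u _ => ?_
        have : ((r:ℕ):ℚ) = (p:ℚ) + i - q - j := by
          rw [hrdef, Nat.cast_sub (by omega), Nat.cast_sub (by omega)]; push_cast; ring
        rw [this]; ring
      rw [h1, h2,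
        show m + (n-1-j) = q + (n-1-i) by omega,
        show r + j = (p-q) + i by omega,
        show p - m = r by omega]
      have hA : (((q + (n-1-i)).factorial : ℚ)) ≠ 0 := by positivity
      have hB : ((((p-q) + i).factorial : ℚ)) ≠ 0 := by positivity
      have hm0 : ((m.factorial : ℚ)) ≠ 0 := by positivity
      have hr0 : ((r.factorial : ℚ)) ≠ 0 := by positivity
      field_simp
    · -- choose = 0 since q+j-i > p
      rw [if_pos hij, Nat.choose_eq_zero_of_lt (by omega), Nat.cast_zero]
      have hz : (∏ u ∈ Finset.range j, ((i:ℚ) + ((p:ℚ) - q - u))) = 0 := by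
        refine Finset.prod_eq_zero (i := p + i - q) (Finset.mem_range.2 (by omega)) ?_
        rw [Nat.cast_sub (by omega)]; push_cast; ring
      rw [hz, mul_zero, mul_zero]
  · -- i > q + j
    rw [if_neg hij]
    have hz : (∏ s ∈ Finset.Ioc j (n-1), ((q:ℚ) + s - i)) = 0 := by
      refine Finset.prod_eq_zero (i := i - q) (Finset.mem_Ioc.2 (by omega)) ?_
      rw [Nat.cast_sub (by omega)]; push_cast; ring
    rw [hz, zero_mul, mul_zero]

/-- For integers `p ≥ q ≥ 0` and `n ≥ 1`, the `n × n` matrix with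
entries `C(p, q − i + j)` (for `1 ≤ i, j ≤ n`, with `C(p, m) = 0` for `m < 0`) is
nonsingular, and its determinant satisfies
`det N · H(p) · H(p−q+n) · H(q+n) = H(n) · H(p+n) · H(p−q) · H(q)`. -/
theorem binomial_matrix_det (p q n : ℕ) (hpq : q ≤ p) (hn : 1 ≤ n)
    (N : Matrix (Fin n) (Fin n) ℤ)
    (hN : ∀ i j : Fin n, N i j =
      if (i : ℕ) ≤ q + (j : ℕ) then (Nat.choose p (q + (j : ℕ) - (i : ℕ)) : ℤ) else 0) :
    N.det ≠ 0 ∧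
      N.det * (hyperfactorial p : ℤ) * (hyperfactorial (p - q + n) : ℤ) *
          (hyperfactorial (q + n) : ℤ) =
        (hyperfactorial n : ℤ) * (hyperfactorial (p + n) : ℤ) *
          (hyperfactorial (p - q) : ℤ) * (hyperfactorial q : ℤ) := by
  classical
  set c : Fin n → ℚ := fun i => (p.factorial : ℚ) /
    (((q + (n-1-(i:ℕ))).factorial : ℚ) * (((p-q) + (i:ℕ)).factorial : ℚ)) with hc
  have hmap : N.map (Int.cast : ℤ → ℚ) =
      Matrix.diagonal c * Matrix.of (fun i j : Fin n => (auxP p q n (j:ℕ)).eval ((i:ℕ):ℚ)) := by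
    ext i j
    rw [Matrix.map_apply, Matrix.diagonal_mul, Matrix.of_apply, hN i j]
    have hcast : ((if (i:ℕ) ≤ q + (j:ℕ) then ((p.choose (q+(j:ℕ)-(i:ℕ)) : ℤ)) else 0 : ℤ) : ℚ)
        = (if (i:ℕ) ≤ q + (j:ℕ) then ((p.choose (q+(j:ℕ)-(i:ℕ))) : ℚ) else 0) := by
      split_ifs <;> simp
    rw [hcast, entry_eq p q n hpq i.isLt j.isLt]
  have hdet1 : ((N.det : ℤ) : ℚ) = (∏ i, c i) *
      ∏ i : Fin n, (((n-1-(i:ℕ)).factorial : ℚ) * (((p+(i:ℕ)).factorial : ℚ) / (p.factorial : ℚ))) := by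
    have h0 := RingHom.map_det (Int.castRingHom ℚ) N
    rw [show ((N.det : ℤ) : ℚ) = (Int.castRingHom ℚ) N.det from rfl, h0,
      RingHom.mapMatrix_apply,
      show N.map (⇑(Int.castRingHom ℚ)) = N.map (Int.cast : ℤ → ℚ) from rfl, hmap,
      Matrix.det_mul, Matrix.det_diagonal, det_shift_invariant, det_tri p q n hn]
  set Dq : ℚ := ∏ i ∈ Finset.range n, ((q+i).factorial : ℚ) with hDq
  set Dpq : ℚ := ∏ i ∈ Finset.range n, (((p-q)+i).factorial : ℚ) with hDpq
  set Np : ℚ := ∏ i ∈ Finset.range n, ((p+i).factorial : ℚ) with hNp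
  set N0 : ℚ := ∏ i ∈ Finset.range n, ((Nat.factorial i : ℚ)) with hN0
  have hfne : (p.factorial : ℚ) ≠ 0 := by positivity
  have hprodc : (∏ i, c i) = (p.factorial : ℚ)^n / (Dq * Dpq) := by
    rw [hc, Fin.prod_univ_eq_prod_range (fun i => (p.factorial : ℚ) /
      (((q + (n-1-i)).factorial : ℚ) * (((p-q) + i).factorial : ℚ))) n]
    have h1 : ∏ i ∈ Finset.range n, ((q + (n-1-i)).factorial : ℚ) = Dq := by
      rw [hDq, ← Finset.prod_range_reflect (fun i => ((q+i).factorial : ℚ)) n]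
    rw [Finset.prod_div_distrib, Finset.prod_const, Finset.card_range,
      Finset.prod_mul_distrib, h1]
  have hprodd : (∏ i : Fin n, (((n-1-(i:ℕ)).factorial : ℚ) *
      (((p+(i:ℕ)).factorial : ℚ) / (p.factorial : ℚ)))) = N0 * Np / (p.factorial : ℚ)^n := by
    rw [Fin.prod_univ_eq_prod_range (fun i => ((n-1-i).factorial : ℚ) *
      (((p+i).factorial : ℚ) / (p.factorial : ℚ))) n]
    have h1 : ∏ i ∈ Finset.range n, ((n-1-i).factorial : ℚ) = N0 := by
      rw [hN0, ← Finset.prod_range_reflect (fun i => ((Nat.factorial i : ℚ))) n]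
    rw [Finset.prod_mul_distrib, Finset.prod_div_distrib, Finset.prod_const,
      Finset.card_range, h1]
    ring
  have hDq0 : Dq ≠ 0 := by rw [hDq]; positivity
  have hDpq0 : Dpq ≠ 0 := by rw [hDpq]; positivity
  have hNp0 : Np ≠ 0 := by rw [hNp]; positivity
  have hN00 : N0 ≠ 0 := by rw [hN0]; positivity
  have hdet : ((N.det : ℤ) : ℚ) = N0 * Np / (Dq * Dpq) := by
    rw [hdet1, hprodc, hprodd]
    field_simp
  constructor
  · intro h
    rw [h] at hdet
    simp only [Int.cast_zero] at hdet
    have : N0 * Np = 0 := by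
      field_simp at hdet
      linarith
    rcases mul_eq_zero.1 this with h' | h' <;> [exact hN00 h'; exact hNp0 h']
  · have hsplit : ∀ a : ℕ, ((hyperfactorial (a + n) : ℚ)) =
        (hyperfactorial a : ℚ) * ∏ i ∈ Finset.range n, ((a+i).factorial : ℚ) := by
      intro a
      rw [hyperfactorial, hyperfactorial, Finset.prod_range_add]
      push_cast
      ring
    have key : ((N.det : ℤ) : ℚ) * (hyperfactorial p : ℚ) * (hyperfactorial (p - q + n) : ℚ) *
          (hyperfactorial (q + n) : ℚ) =
        (hyperfactorial n : ℚ) * (hyperfactorial (p + n) : ℚ) *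
          (hyperfactorial (p - q) : ℚ) * (hyperfactorial q : ℚ) := by
      rw [hdet, hsplit (p-q), hsplit q, hsplit p, ← hDq, ← hDpq, ← hNp]
      have hn0 : (hyperfactorial n : ℚ) = N0 := by
        rw [hyperfactorial, hN0]; push_cast; rfl
      rw [hn0]
      field_simp
    exact_mod_cast key
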